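/- For any positive integer s, the sum over i from 0 to s of C(s,i)·|s−2i| equals 2·⌈s/2⌉·C(s,⌈s/2⌉). -/

import Mathlib

lemma tele0 (s : ℕ) (hs : 0 < s) : ∀ k, k ≤ s →
    ∑ i ∈ Finset.range (k+1), (s.choose i : ℤ) * ((s : ℤ) - 2*i) = s * ((s-1).choose k) := by
  intro k
  induction k with
  | zero => intro _; simp
  | succ k ih =>
    intro hk
    rw [Finset.sum_range_succ, ih (by omega)]
    have h1 : s * (s-1).choose k = s.choose (k+1) * (k+1) := by
      have := Nat.add_one_mul_choose_eq (s-1) k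
      rwa [Nat.sub_add_cancel hs] at this
    have h2 : (s-1).choose (k+1) * s = s.choose (k+1) * (s - (k+1)) := by
      have := Nat.choose_mul_succ_eq (s-1) (k+1)
      rwa [Nat.sub_add_cancel hs] at this
    have h1' : (s : ℤ) * (s-1).choose k = s.choose (k+1) * (k+1) := by exact_mod_cast h1
    have h2' : ((s-1).choose (k+1) : ℤ) * s = s.choose (k+1) * ((s : ℤ) - (k+1)) := by
      have : ((s-1).choose (k+1) : ℤ) * s = s.choose (k+1) * ((s - (k+1) : ℕ) : ℤ) := by
        exact_mod_cast h2
      rwa [Nat.cast_sub hk] at this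
    push_cast
    push_cast at h1' h2'
    nlinarith [h1', h2']

theorem stmt0 (s : ℕ) (hs : 0 < s) :
    ∑ i ∈ Finset.range (s + 1), s.choose i * ((s : ℤ) - 2 * i).natAbs
      = 2 * ⌈(s : ℚ) / 2⌉₊ * s.choose ⌈(s : ℚ) / 2⌉₊ := by
  have hm : ⌈(s : ℚ) / 2⌉₊ = (s + 1) / 2 := by
    rcases Nat.even_or_odd s with ⟨t, ht⟩ | ⟨t, ht⟩
    · subst ht
      rw [show ((t + t : ℕ) : ℚ) / 2 = (t : ℚ) from by push_cast; ring, Nat.ceil_natCast]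
      omega
    · subst ht
      rw [show ((2 * t + 1 : ℕ) : ℚ) / 2 = (t : ℚ) + 1/2 from by push_cast; ring,
        show (2 * t + 1 + 1) / 2 = t + 1 from by omega,
        Nat.ceil_eq_iff (by omega)]
      constructor
      · push_cast; norm_num
      · push_cast; norm_num
  rw [hm]
  set m := (s + 1) / 2 with hmdef
  have key : (∑ i ∈ Finset.range (s + 1), (s.choose i : ℤ) * |(s : ℤ) - 2 * i|)
      = 2 * m * s.choose m := by
    have htot : ∑ i ∈ Finset.range (s + 1), (s.choose i : ℤ) * ((s : ℤ) - 2 * i) = 0 := by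
      have h := tele0 s hs s le_rfl
      rw [h, Nat.choose_eq_zero_of_lt (by omega)]
      simp
    have hfirst : ∑ i ∈ Finset.range m, (s.choose i : ℤ) * ((s : ℤ) - 2 * i)
        = s * ((s-1).choose (m-1)) := by
      have h := tele0 s hs (m - 1) (by omega)
      rwa [show m - 1 + 1 = m from by omega] at h
    have hsplit : (∑ i ∈ Finset.range m, (s.choose i : ℤ) * ((s : ℤ) - 2 * i))
        + ∑ i ∈ Finset.Ico m (s+1), (s.choose i : ℤ) * ((s : ℤ) - 2 * i)
        = ∑ i ∈ Finset.range (s + 1), (s.choose i : ℤ) * ((s : ℤ) - 2 * i) :=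
      Finset.sum_range_add_sum_Ico _ (by omega)
    have hsplit2 : (∑ i ∈ Finset.range m, (s.choose i : ℤ) * |(s : ℤ) - 2 * i|)
        + ∑ i ∈ Finset.Ico m (s+1), (s.choose i : ℤ) * |(s : ℤ) - 2 * i|
        = ∑ i ∈ Finset.range (s + 1), (s.choose i : ℤ) * |(s : ℤ) - 2 * i| :=
      Finset.sum_range_add_sum_Ico _ (by omega)
    have e1 : (∑ i ∈ Finset.range m, (s.choose i : ℤ) * |(s : ℤ) - 2 * i|)
        = ∑ i ∈ Finset.range m, (s.choose i : ℤ) * ((s : ℤ) - 2 * i) := by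
      apply Finset.sum_congr rfl
      intro i hi
      rw [Finset.mem_range] at hi
      have h2i : 2 * i ≤ s := by omega
      have h2i' : (2 * i : ℤ) ≤ s := by exact_mod_cast h2i
      rw [abs_of_nonneg (by linarith)]
    have e2 : (∑ i ∈ Finset.Ico m (s+1), (s.choose i : ℤ) * |(s : ℤ) - 2 * i|)
        = ∑ i ∈ Finset.Ico m (s+1), (s.choose i : ℤ) * (-((s : ℤ) - 2 * i)) := by
      apply Finset.sum_congr rfl
      intro i hi
      rw [Finset.mem_Ico] at hi
      have h2i : s ≤ 2 * i := by omega
      have h2i' : (s : ℤ) ≤ 2 * i := by exact_mod_cast h2i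
      rw [abs_of_nonpos (by linarith)]
    have e2' : (∑ i ∈ Finset.Ico m (s+1), (s.choose i : ℤ) * (-((s : ℤ) - 2 * i)))
        = - ∑ i ∈ Finset.Ico m (s+1), (s.choose i : ℤ) * ((s : ℤ) - 2 * i) := by
      rw [← Finset.sum_neg_distrib]
      apply Finset.sum_congr rfl
      intro i _; ring
    have hchoose : s * (s-1).choose (m-1) = m * s.choose m := by
      have h := Nat.add_one_mul_choose_eq (s-1) (m-1)
      rw [Nat.sub_add_cancel hs, show m - 1 + 1 = m from by omega] at h
      rw [h, Nat.mul_comm]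
    rw [← hsplit2, e1, e2, e2']
    have : (∑ i ∈ Finset.Ico m (s+1), (s.choose i : ℤ) * ((s : ℤ) - 2 * i))
        = - s * ((s-1).choose (m-1)) := by
      have := hsplit
      rw [hfirst, htot] at this
      linarith
    rw [hfirst, this]
    have hc : (s : ℤ) * (s-1).choose (m-1) = m * s.choose m := by exact_mod_cast hchoose
    linarith [hc]
  calc (∑ i ∈ Finset.range (s + 1), s.choose i * ((s : ℤ) - 2 * i).natAbs)
      = 2 * m * s.choose m := by
        have : ((∑ i ∈ Finset.range (s + 1), s.choose i * ((s : ℤ) - 2 * i).natAbs : ℕ) : ℤ)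
            = ((2 * m * s.choose m : ℕ) : ℤ) := by
          push_cast
          linarith [key]
        exact_mod_cast this
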